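/- 𝔭 = min{𝔭*, 𝔱}, where 𝔭* is the minimal size of a centered family in [ℕ]^∞ which is not linearly refinable. -/

import Mathlib

open Cardinal Set

/-- `A` is almost contained in `B`: `A \ B` is finite. -/
def ASub (A B : Set ℕ) : Prop := (A \ B).Finite

/-- A family is linearly quasiordered by `⊆*`. -/
def LinQO (F : Set (Set ℕ)) : Prop := ∀ A ∈ F, ∀ B ∈ F, ASub A B ∨ ASub B A

/-- A centered family of infinite subsets of `ℕ`. -/
def Centered (F : Set (Set ℕ)) : Prop :=
  (∀ A ∈ F, A.Infinite) ∧
  ∀ G : Finset (Set ℕ), ↑G ⊆ F → G.Nonempty → (⋂ A ∈ G, A).Infinite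

/-- `A` is a pseudo-intersection of `F`. -/
def PseudoInt (F : Set (Set ℕ)) (A : Set ℕ) : Prop :=
  A.Infinite ∧ ∀ B ∈ F, ASub A B

/-- The pseudo-intersection number 𝔭. -/
noncomputable def pNum : Cardinal :=
  sInf {c | ∃ F : Set (Set ℕ), Centered F ∧ (¬∃ A, PseudoInt F A) ∧ c = #F}

/-- The tower number 𝔱. -/
noncomputable def tNum : Cardinal :=
  sInf {c | ∃ F : Set (Set ℕ), (∀ A ∈ F, A.Infinite) ∧ LinQO F ∧
    (¬∃ A, PseudoInt F A) ∧ c = #F}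

/-- Eventual dominance `f ≤* g`. -/
def LeStar (f g : ℕ → ℕ) : Prop := {n | g n < f n}.Finite

def UnboundedFam (B : Set (ℕ → ℕ)) : Prop := ¬∃ g, ∀ f ∈ B, LeStar f g

def DominatingFam (D : Set (ℕ → ℕ)) : Prop := ∀ f, ∃ g ∈ D, LeStar f g

/-- The unbounding number 𝔟. -/
noncomputable def bNum : Cardinal := sInf {c | ∃ B, UnboundedFam B ∧ c = #B}

/-- The dominating number 𝔡. -/
noncomputable def dNum : Cardinal := sInf {c | ∃ D, DominatingFam D ∧ c = #D}

def SplittingFam (S : Set (Set ℕ)) : Prop :=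
  ∀ A : Set ℕ, A.Infinite → ∃ s ∈ S, (A ∩ s).Infinite ∧ (A \ s).Infinite

/-- The splitting number 𝔰. -/
noncomputable def sNum : Cardinal := sInf {c | ∃ S, SplittingFam S ∧ c = #S}

/-- `g` avoids middles in `X` with respect to `⟨R,S⟩`. -/
def AvoidsMiddles (R S : ℕ → ℕ → Prop) (g : ℕ → ℕ) (X : Set (ℕ → ℕ)) : Prop :=
  (∀ f ∈ X, {n | R (f n) (g n)}.Infinite) ∧
  ∀ f ∈ X, ∀ h ∈ X,
    {n | R (f n) (g n) ∧ S (g n) (h n)}.Finite ∨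
    {n | R (h n) (g n) ∧ S (g n) (f n)}.Finite

/-- The excluded middle property with respect to `⟨R,S⟩`. -/
def EMP (R S : ℕ → ℕ → Prop) (X : Set (ℕ → ℕ)) : Prop := ∃ g, AvoidsMiddles R S g X

/-- The cardinal 𝔵_{R,S}. -/
noncomputable def xNum (R S : ℕ → ℕ → Prop) : Cardinal :=
  sInf {c | ∃ X : Set (ℕ → ℕ), ¬ EMP R S X ∧ c = #X}

/-- The class 𝔅 of bounded sets. -/
def ClB (Y : Set (ℕ → ℕ)) : Prop := ∃ g, ∀ f ∈ Y, LeStar f g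

/-- The class 𝔛. -/
def ClX (Y : Set (ℕ → ℕ)) : Prop := EMP (· < ·) (· ≤ ·) Y

/-- `Y` is finitely dominating: `maxfin Y` is dominating. -/
def FinDominating (Y : Set (ℕ → ℕ)) : Prop :=
  ∀ f : ℕ → ℕ, ∃ F : Finset (ℕ → ℕ), ↑F ⊆ Y ∧ LeStar f (fun n => F.sup (fun h => h n))

/-- The class 𝔇fin of non finitely-dominating sets. -/
def ClDfin (Y : Set (ℕ → ℕ)) : Prop := ¬ FinDominating Y

/-- The class 𝔇 of non-dominating sets. -/
def ClD (Y : Set (ℕ → ℕ)) : Prop := ¬ DominatingFam Y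

/-- The additivity number add(I, J). -/
noncomputable def addNum (I J : Set (ℕ → ℕ) → Prop) : Cardinal :=
  sInf {c | ∃ Fam : Set (Set (ℕ → ℕ)), (∀ Y ∈ Fam, I Y) ∧ ¬ J (⋃₀ Fam) ∧ c = #Fam}

/-- The Boolean subalgebra of `P(ℕ)` generated by `F`. -/
def genBA (F : Set (Set ℕ)) : Set (Set ℕ) :=
  ⋂₀ {C | F ⊆ C ∧ Set.univ ∈ C ∧ (∀ A ∈ C, Aᶜ ∈ C) ∧ ∀ A ∈ C, ∀ B ∈ C, A ∩ B ∈ C}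

/-- A nonprincipal ultrafilter (every member is infinite). -/
def NonPrincipal (U : Ultrafilter ℕ) : Prop := ∀ S ∈ U, Set.Infinite S

/-- The cofinality of the reduced product `ℕ^ℕ/U`. -/
noncomputable def cofRP (U : Ultrafilter ℕ) : Cardinal :=
  sInf {c | ∃ C : Set (ℕ → ℕ), (∀ f : ℕ → ℕ, ∃ g ∈ C, {n | f n ≤ g n} ∈ U) ∧ c = #C}


/-- `Y` is linearly refinable. -/
def LinRefinable (Y : Set (Set ℕ)) : Prop :=
  ∃ r : Set ℕ → Set ℕ, (∀ y ∈ Y, r y ⊆ y ∧ (r y).Infinite) ∧ LinQO (r '' Y)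

/-- The cardinal 𝔭*. -/
noncomputable def pStarNum : Cardinal :=
  sInf {c | ∃ F : Set (Set ℕ), Centered F ∧ ¬ LinRefinable F ∧ c = #F}

namespace Stmt3Aux

lemma asub_refl (a : Set ℕ) : ASub a a := by simp [ASub]

lemma asub_trans {a b c : Set ℕ} (h1 : ASub a b) (h2 : ASub b c) : ASub a c := by
  apply (h1.union h2).subset
  rintro x ⟨hxa, hxc⟩
  by_cases hb : x ∈ b
  · exact Or.inr ⟨hb, hxc⟩
  · exact Or.inl ⟨hxa, hb⟩

lemma asub_of_subset {a b c : Set ℕ} (h : a ⊆ b) (h2 : ASub b c) : ASub a c :=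
  h2.subset (fun x hx => ⟨h hx.1, hx.2⟩)

lemma asub_of_subset' {a b c : Set ℕ} (h2 : ASub a b) (h : b ⊆ c) : ASub a c :=
  h2.subset (fun x hx => ⟨hx.1, fun hb => hx.2 (h hb)⟩)

lemma finset_min {F : Set (Set ℕ)} (hF : LinQO F) (G : Finset (Set ℕ)) :
    ↑G ⊆ F → G.Nonempty → ∃ A ∈ G, ∀ B ∈ G, ASub A B := by
  classical
  induction G using Finset.induction_on with
  | empty => intro _ h; exact absurd h (by simp)
  | @insert a s ha ih =>
    intro hsub hne
    have haF : a ∈ F := hsub (by simp)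
    by_cases hs : s.Nonempty
    · obtain ⟨A, hAs, hmin⟩ := ih (fun x hx => hsub (by
        simp only [Finset.coe_insert, Set.mem_insert_iff]
        exact Or.inr hx)) hs
      have hAF : A ∈ F := hsub (by
        simp only [Finset.coe_insert, Set.mem_insert_iff]
        exact Or.inr hAs)
      rcases hF a haF A hAF with h | h
      · refine ⟨a, Finset.mem_insert_self a s, ?_⟩
        intro B hB
        rcases Finset.mem_insert.mp hB with rfl | hB
        · exact asub_refl _
        · exact asub_trans h (hmin B hB)
      · refine ⟨A, Finset.mem_insert_of_mem hAs, ?_⟩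
        intro B hB
        rcases Finset.mem_insert.mp hB with rfl | hB
        · exact h
        · exact hmin B hB
    · rw [Finset.not_nonempty_iff_eq_empty] at hs
      subst hs
      refine ⟨a, Finset.mem_insert_self a _, ?_⟩
      intro B hB
      simp only [Finset.mem_insert, Finset.notMem_empty, or_false] at hB
      subst hB
      exact asub_refl _

lemma tower_centered {F : Set (Set ℕ)} (hinf : ∀ A ∈ F, A.Infinite) (hlin : LinQO F) :
    Centered F := by
  refine ⟨hinf, fun G hG hne => ?_⟩
  obtain ⟨A, hAG, hmin⟩ := finset_min hlin G hG hne
  have hU : (⋃ B ∈ G, A \ B).Finite :=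
    Set.Finite.biUnion G.finite_toSet (fun B hB => hmin B hB)
  have hsub : A \ (⋃ B ∈ G, A \ B) ⊆ ⋂ B ∈ G, B := by
    rintro x ⟨hxA, hx2⟩
    simp only [Set.mem_iInter]
    intro B hB
    by_contra hxB
    exact hx2 (Set.mem_biUnion hB ⟨hxA, hxB⟩)
  exact ((hinf A (hG hAG)).diff hU).mono hsub

lemma exists_tower :
    ∃ F : Set (Set ℕ), (∀ A ∈ F, A.Infinite) ∧ LinQO F ∧ ¬∃ A, PseudoInt F A := by
  have hchaincond : ∀ c ⊆ {F : Set (Set ℕ) | (∀ A ∈ F, A.Infinite) ∧ LinQO F},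
      IsChain (· ⊆ ·) c → ∃ ub ∈ {F : Set (Set ℕ) | (∀ A ∈ F, A.Infinite) ∧ LinQO F},
        ∀ s ∈ c, s ⊆ ub := by
    intro c hc hchain
    refine ⟨⋃₀ c, ⟨?_, ?_⟩, fun s hs => Set.subset_sUnion_of_mem hs⟩
    · rintro A ⟨F, hF, hA⟩
      exact (hc hF).1 A hA
    · rintro A ⟨F1, hF1, hA⟩ B ⟨F2, hF2, hB⟩
      rcases hchain.total hF1 hF2 with h | h
      · exact (hc hF2).2 A (h hA) B hB
      · exact (hc hF1).2 A hA B (h hB)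
  obtain ⟨M, hM⟩ := zorn_subset _ hchaincond
  · obtain ⟨hMinf, hMlin⟩ := hM.1
    refine ⟨M, hMinf, hMlin, ?_⟩
    rintro ⟨A, hAinf, hAsub⟩
    let e : ℕ ↪ ↑A := hAinf.natEmbedding
    have hecoe : ∀ {m n : ℕ}, (e m : ℕ) = (e n : ℕ) → m = n :=
      fun h => e.injective (Subtype.coe_injective h)
    let A' : Set ℕ := Set.range (fun n => (e (2 * n) : ℕ))
    have hA'sub : A' ⊆ A := by rintro x ⟨n, rfl⟩; exact (e (2 * n)).2
    have hA'inf : A'.Infinite :=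
      Set.infinite_range_of_injective (fun m n h => by
        have := hecoe h; omega)
    have hMA' : (∀ B ∈ M ∪ {A'}, B.Infinite) ∧ LinQO (M ∪ {A'}) := by
      constructor
      · rintro B (hB | rfl)
        · exact hMinf B hB
        · exact hA'inf
      · rintro B (hB | rfl) C (hC | rfl)
        · exact hMlin B hB C hC
        · exact Or.inr (asub_of_subset hA'sub (hAsub B hB))
        · exact Or.inl (asub_of_subset hA'sub (hAsub C hC))
        · exact Or.inl (asub_refl _)
    have hA'M : A' ∈ M := by
      have := hM.2 hMA' Set.subset_union_left
      exact this (Set.mem_union_right _ rfl)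
    have hfin : (A \ A').Finite := hAsub A' hA'M
    have hinj : Function.Injective (fun n => (e (2 * n + 1) : ℕ)) := by
      intro m n h
      have := hecoe h
      omega
    have hmem : ∀ n : ℕ, (e (2 * n + 1) : ℕ) ∈ A \ A' := by
      intro n
      refine ⟨(e (2 * n + 1)).2, ?_⟩
      rintro ⟨m, hm⟩
      have := hecoe hm.symm
      omega
    exact Set.infinite_of_injective_forall_mem hinj hmem hfin

lemma refinable_of_pi {F : Set (Set ℕ)} {A : Set ℕ} (hA : PseudoInt F A) :
    LinRefinable F := by
  refine ⟨fun y => A ∩ y, fun y hy => ⟨Set.inter_subset_right, ?_⟩, ?_⟩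
  · intro hfin
    have hsub : A ⊆ (A ∩ y) ∪ (A \ y) := by
      intro x hx
      by_cases h : x ∈ y
      · exact Or.inl ⟨hx, h⟩
      · exact Or.inr ⟨hx, h⟩
    exact hA.1 ((hfin.union (hA.2 y hy)).subset hsub)
  · rintro x ⟨y, hy, rfl⟩ z ⟨w, hw, rfl⟩
    left
    exact (hA.2 w hw).subset (fun u hu => ⟨hu.1.1, fun h => hu.2 ⟨hu.1.1, h⟩⟩)

lemma image_no_pi {F : Set (Set ℕ)} {r : Set ℕ → Set ℕ}
    (hr : ∀ y ∈ F, r y ⊆ y ∧ (r y).Infinite) (hnpi : ¬∃ A, PseudoInt F A) :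
    ¬∃ A, PseudoInt (r '' F) A := by
  rintro ⟨A, hAinf, hAsub⟩
  exact hnpi ⟨A, hAinf, fun y hy =>
    asub_of_subset' (hAsub (r y) ⟨y, hy, rfl⟩) (hr y hy).1⟩

/-! The ultrafilter witness for `𝔭*`. -/

def Aset (n : ℕ) : Set ℕ := {m | (Nat.unpair m).1 = n}

def Bset (k : ℕ) : Set ℕ := {m | k ≤ (Nat.unpair m).1}

def SmallSet (X : Set ℕ) : Prop := ∀ n, (X ∩ Aset n).Finite

lemma aset_infinite (n : ℕ) : (Aset n).Infinite := by
  apply Set.infinite_of_injective_forall_mem (f := fun k => Nat.pair n k)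
  · intro a b h
    simpa using congrArg (fun m => (Nat.unpair m).2) h
  · intro k
    simp [Aset]

lemma bset_diff_infinite {k : ℕ} {X : Set ℕ} (hX : SmallSet X) :
    (Bset k \ X).Infinite := by
  apply ((aset_infinite k).diff (hX k)).mono
  rintro x ⟨hx1, hx2⟩
  have hx1' : (Nat.unpair x).1 = k := hx1
  exact ⟨by simp [Bset, hx1'], fun hX' => hx2 ⟨hX', hx1⟩⟩

def preF : Filter ℕ where
  sets := {Y | ∃ k X, SmallSet X ∧ Bset k \ X ⊆ Y}
  univ_sets := ⟨0, ∅, fun n => by simp, by simp⟩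
  sets_of_superset := by
    rintro Y Z ⟨k, X, hX, hsub⟩ hYZ
    exact ⟨k, X, hX, hsub.trans hYZ⟩
  inter_sets := by
    rintro Y Z ⟨k, X, hX, hsub⟩ ⟨k', X', hX', hsub'⟩
    refine ⟨max k k', X ∪ X', fun n => ((hX n).union (hX' n)).subset ?_, ?_⟩
    · rintro x ⟨h1 | h1, h2⟩
      · exact Or.inl ⟨h1, h2⟩
      · exact Or.inr ⟨h1, h2⟩
    · rintro x ⟨hxB, hxX⟩
      have hxB' : max k k' ≤ (Nat.unpair x).1 := hxB
      constructor
      · exact hsub ⟨by simp [Bset]; omega, fun h => hxX (Or.inl h)⟩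
      · exact hsub' ⟨by simp [Bset]; omega, fun h => hxX (Or.inr h)⟩

instance preF_neBot : preF.NeBot := by
  rw [← Filter.forall_mem_nonempty_iff_neBot]
  rintro Y ⟨k, X, hX, hsub⟩
  obtain ⟨x, hx⟩ := (bset_diff_infinite hX).nonempty
  exact ⟨x, hsub hx⟩

noncomputable def UU : Ultrafilter ℕ := (Ultrafilter.exists_le preF).choose

lemma UU_le : (UU : Filter ℕ) ≤ preF := (Ultrafilter.exists_le preF).choose_spec

lemma bset_mem (k : ℕ) : Bset k ∈ UU :=
  UU_le ⟨k, ∅, fun n => by simp, by simp⟩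

lemma not_small_of_mem {X : Set ℕ} (hX : X ∈ UU) : ¬ SmallSet X := by
  intro hsmall
  have hc : Xᶜ ∈ UU := UU_le ⟨0, X, hsmall, fun x hx => hx.2⟩
  exact (Ultrafilter.compl_notMem_iff.mpr hX) hc

lemma infinite_of_mem {X : Set ℕ} (hX : X ∈ UU) : X.Infinite := by
  by_contra h
  rw [Set.not_infinite] at h
  exact not_small_of_mem hX (fun n => h.subset Set.inter_subset_left)

lemma W_centered : Centered {X : Set ℕ | X ∈ UU} := by
  refine ⟨fun A hA => infinite_of_mem hA, fun G hG hne => ?_⟩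
  have hm : (⋂ A ∈ G, A) ∈ UU := (Filter.biInter_finset_mem G).mpr (fun A hA => hG hA)
  exact infinite_of_mem hm

lemma W_not_refinable : ¬ LinRefinable {X : Set ℕ | X ∈ UU} := by
  rintro ⟨r, hr, hlin⟩
  -- every member of the ultrafilter refines into the ultrafilter
  have hrU : ∀ X, X ∈ UU → r X ∈ UU := by
    intro X hX
    by_contra hrX
    have hXc : (r X)ᶜ ∈ UU := Ultrafilter.compl_mem_iff_notMem.mpr hrX
    have h1 := hr X hX
    have h2 := hr _ hXc
    rcases hlin (r ((r X)ᶜ)) ⟨(r X)ᶜ, hXc, rfl⟩ (r X) ⟨X, hX, rfl⟩ with h | h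
    · exact h2.2 (h.subset (fun x hx => ⟨hx, h2.1 hx⟩))
    · exact h1.2 (h.subset (fun x hx => ⟨hx, fun hz => h2.1 hz hx⟩))
  -- the decreasing sequence
  let f : ℕ → Set ℕ := fun k => Nat.rec (r (Bset 0)) (fun k fk => r (fk ∩ Bset (k + 1))) k
  have hfU : ∀ k, f k ∈ UU := by
    intro k
    induction k with
    | zero => exact hrU _ (bset_mem 0)
    | succ k ih => exact hrU _ (Filter.inter_mem ih (bset_mem (k + 1)))
  have hfim : ∀ k, f k ∈ r '' {X : Set ℕ | X ∈ UU} := by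
    intro k
    cases k with
    | zero => exact ⟨Bset 0, bset_mem 0, rfl⟩
    | succ k => exact ⟨f k ∩ Bset (k + 1), Filter.inter_mem (hfU k) (bset_mem (k + 1)), rfl⟩
  have hfB : ∀ k, f k ⊆ Bset k := by
    intro k
    cases k with
    | zero => exact (hr _ (bset_mem 0)).1
    | succ k =>
      exact ((hr _ (Filter.inter_mem (hfU k) (bset_mem (k + 1)))).1).trans
        Set.inter_subset_right
  have hfdec : ∀ k, f (k + 1) ⊆ f k := fun k =>
    ((hr _ (Filter.inter_mem (hfU k) (bset_mem (k + 1)))).1).trans Set.inter_subset_left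
  have hfmono : ∀ i j, i ≤ j → f j ⊆ f i := by
    intro i j h
    obtain ⟨d, rfl⟩ := Nat.exists_eq_add_of_le h
    clear h
    induction d with
    | zero => exact subset_rfl
    | succ d ih => exact (hfdec (i + d)).trans ih
  -- a set almost contained in cofinally many `f k'` is small
  have hsmall_of : ∀ t : Set ℕ, (∀ k : ℕ, ∃ k', k ≤ k' ∧ (t \ f k').Finite) → SmallSet t := by
    intro t ht n
    obtain ⟨k', hk1, hk2⟩ := ht (n + 1)
    apply hk2.subset
    rintro x ⟨hxt, hxA⟩
    refine ⟨hxt, fun hxf => ?_⟩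
    have hB : k' ≤ (Nat.unpair x).1 := hfB k' hxf
    have hA : (Nat.unpair x).1 = n := hxA
    omega
  have hstep : ∀ m, ∃ k, m < k ∧ (f m \ f k).Infinite := by
    intro m
    by_contra h
    push_neg at h
    apply not_small_of_mem (hfU m)
    apply hsmall_of
    intro k
    refine ⟨max k (m + 1), le_max_left _ _, ?_⟩
    have hlt : m < max k (m + 1) := lt_of_lt_of_le (Nat.lt_succ_self m) (le_max_right _ _)
    have := h (max k (m + 1)) hlt
    exact this
  -- the subsequence with infinite differences
  let κ : ℕ → ℕ := fun i => Nat.rec 0 (fun _ ki => (hstep ki).choose) i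
  have hκlt : ∀ i, κ i < κ (i + 1) := fun i => (hstep (κ i)).choose_spec.1
  have hκmono : ∀ i j, i ≤ j → κ i ≤ κ j := by
    intro i j h
    obtain ⟨d, rfl⟩ := Nat.exists_eq_add_of_le h
    clear h
    induction d with
    | zero => exact le_refl _
    | succ d ih => exact ih.trans (hκlt _).le
  have hκge : ∀ i, i ≤ κ i := by
    intro i
    induction i with
    | zero => exact Nat.zero_le _
    | succ i ih => exact Nat.succ_le_of_lt (lt_of_le_of_lt ih (hκlt i))
  let s : ℕ → Set ℕ := fun i => f (κ i)
  have hsmono : ∀ i j, i ≤ j → s j ⊆ s i := fun i j h => hfmono _ _ (hκmono i j h)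
  have hDinf : ∀ i, (s i \ s (i + 1)).Infinite := fun i => (hstep (κ i)).choose_spec.2
  -- comparability with the subsequence
  have hcomp : ∀ t, t ∈ r '' {X : Set ℕ | X ∈ UU} → t ∈ UU → ∃ i, (s i \ t).Finite := by
    intro t htim htU
    by_contra h
    push_neg at h
    apply not_small_of_mem htU
    apply hsmall_of
    intro k
    refine ⟨κ k, hκge k, ?_⟩
    rcases hlin t htim (s k) (hfim (κ k)) with h' | h'
    · exact h'
    · exact absurd h' (h k)
  -- the alternating union
  let E : Set ℕ := {x | ∃ i, Even i ∧ x ∈ s i \ s (i + 1)}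
  rcases UU.mem_or_compl_mem E with hE | hE
  · have htU : r E ∈ UU := hrU E hE
    obtain ⟨i, hi⟩ := hcomp (r E) ⟨E, hE, rfl⟩ htU
    set j := 2 * i + 1 with hj
    have hDj : (s j \ s (j + 1)).Infinite := hDinf j
    obtain ⟨x, hxD, hxn⟩ := (hDj.diff hi).nonempty
    have hxsi : x ∈ s i := hsmono i j (by omega) hxD.1
    have hxrE : x ∈ r E := by
      by_contra hco
      exact hxn ⟨hxsi, hco⟩
    obtain ⟨e, he, hxe⟩ := (hr E hE).1 hxrE
    rcases Nat.even_iff.mp he with _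
    have hene : e ≠ j := by
      rcases he with ⟨c, rfl⟩
      omega
    rcases lt_or_gt_of_ne hene with hlt | hgt
    · exact hxe.2 (hsmono (e + 1) j hlt hxD.1)
    · exact hxD.2 (hsmono (j + 1) e hgt hxe.1)
  · have htU : r Eᶜ ∈ UU := hrU Eᶜ hE
    obtain ⟨i, hi⟩ := hcomp (r Eᶜ) ⟨Eᶜ, hE, rfl⟩ htU
    set j := 2 * i with hj
    have hDj : (s j \ s (j + 1)).Infinite := hDinf j
    obtain ⟨x, hxD, hxn⟩ := (hDj.diff hi).nonempty
    have hxsi : x ∈ s i := hsmono i j (by omega) hxD.1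
    have hxrE : x ∈ r Eᶜ := by
      by_contra hco
      exact hxn ⟨hxsi, hco⟩
    have hxE : x ∈ E := ⟨j, ⟨i, by omega⟩, hxD⟩
    exact (hr Eᶜ hE).1 hxrE hxE

end Stmt3Aux


open Stmt3Aux in
theorem stmt3 : pNum = min pStarNum tNum := by
  set Pset := {c | ∃ F : Set (Set ℕ), Centered F ∧ (¬∃ A, PseudoInt F A) ∧ c = #F} with hPdef
  set Tset := {c | ∃ F : Set (Set ℕ), (∀ A ∈ F, A.Infinite) ∧ LinQO F ∧
    (¬∃ A, PseudoInt F A) ∧ c = #F} with hTdef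
  set Qset := {c | ∃ F : Set (Set ℕ), Centered F ∧ ¬ LinRefinable F ∧ c = #F} with hQdef
  have hTne : Tset.Nonempty := by
    obtain ⟨F, h1, h2, h3⟩ := exists_tower
    exact ⟨#F, F, h1, h2, h3, rfl⟩
  have hQne : Qset.Nonempty := ⟨#{X : Set ℕ | X ∈ UU}, _, W_centered, W_not_refinable, rfl⟩
  have hTP : Tset ⊆ Pset := by
    rintro c ⟨F, h1, h2, h3, rfl⟩
    exact ⟨F, tower_centered h1 h2, h3, rfl⟩
  have hQP : Qset ⊆ Pset := by
    rintro c ⟨F, h1, h2, rfl⟩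
    refine ⟨F, h1, ?_, rfl⟩
    rintro ⟨A, hA⟩
    exact h2 (refinable_of_pi hA)
  have hPne : Pset.Nonempty := hTne.mono hTP
  have h1 : pNum ≤ pStarNum := csInf_le_csInf (OrderBot.bddBelow _) hQne hQP
  have h2 : pNum ≤ tNum := csInf_le_csInf (OrderBot.bddBelow _) hTne hTP
  refine le_antisymm (le_min h1 h2) ?_
  obtain ⟨F, hcent, hnpi, hcard⟩ := csInf_mem hPne
  by_cases href : LinRefinable F
  · obtain ⟨r, hr, hlinr⟩ := href
    have hmem : #(r '' F) ∈ Tset :=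
      ⟨r '' F, by rintro A ⟨y, hy, rfl⟩; exact (hr y hy).2, hlinr, image_no_pi hr hnpi, rfl⟩
    have : tNum ≤ #(r '' F) := csInf_le (OrderBot.bddBelow _) hmem
    calc min pStarNum tNum ≤ tNum := min_le_right _ _
      _ ≤ #(r '' F) := this
      _ ≤ #F := Cardinal.mk_image_le
      _ = pNum := hcard.symm
  · have hmem : pNum ∈ Qset := ⟨F, hcent, href, hcard⟩
    calc min pStarNum tNum ≤ pStarNum := min_le_left _ _
      _ ≤ pNum := csInf_le (OrderBot.bddBelow _) hmem
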